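/- Let (X, d) be a proper geodesic metric space, γ : [0,∞) → X a unit-speed geodesic ray and b its Busemann function. Then the descending slope |D⁻b|(x) := limsup_{y→x} (b(x) − b(y))⁺/d(x,y) equals 1 at every non-isolated point x ∈ X. -/
import Mathlib

open Filter Metric

theorem statement11 {X : Type*} [MetricSpace X] [ProperSpace X]
    (hgeo : ∀ x y : X, ∃ g : ℝ → X, g 0 = x ∧ g 1 = y ∧
      ∀ s ∈ Set.Icc (0:ℝ) 1, ∀ t ∈ Set.Icc (0:ℝ) 1, dist (g s) (g t) = |s - t| * dist x y)
    (γ : ℝ → X)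
    (hray : ∀ s t : ℝ, 0 ≤ s → 0 ≤ t → dist (γ s) (γ t) = |s - t|)
    (b : X → ℝ)
    (hb : ∀ x : X, Filter.Tendsto (fun t : ℝ => dist x (γ t) - t) Filter.atTop (nhds (b x))) :
    ∀ x : X, (nhdsWithin x {x}ᶜ).NeBot →
      Filter.limsup (fun y : X => max (b x - b y) 0 / dist x y) (nhdsWithin x {x}ᶜ) = 1 := by
  -- b is 1-Lipschitz
  have hlip : ∀ u v : X, b u - b v ≤ dist u v := by
    intro u v
    refine le_of_tendsto_of_tendsto' ((hb u).sub (hb v)) (tendsto_const_nhds) ?_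
    intro t
    have h1 : dist u (γ t) ≤ dist u v + dist v (γ t) := dist_triangle u v (γ t)
    linarith
  have hlipb : LipschitzWith 1 b := by
    refine LipschitzWith.of_dist_le_mul fun u v => ?_
    rw [NNReal.coe_one, one_mul, Real.dist_eq, abs_sub_le_iff]
    exact ⟨hlip u v, by rw [dist_comm]; exact hlip v u⟩
  -- monotonicity: b y ≤ dist y (γ t) - t for t ≥ 0
  have hmono : ∀ (y : X) (t : ℝ), 0 ≤ t → b y ≤ dist y (γ t) - t := by
    intro y t ht
    refine le_of_tendsto (hb y) ?_
    filter_upwards [eventually_ge_atTop t] with s hs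
    have h1 : dist y (γ s) ≤ dist y (γ t) + dist (γ t) (γ s) := dist_triangle _ _ _
    have h2 : dist (γ t) (γ s) = s - t := by
      rw [hray t s ht (ht.trans hs), abs_sub_comm, abs_of_nonneg (sub_nonneg.2 hs)]
    linarith
  -- key: for every r > 0 there is y with dist x y = r and r ≤ b x - b y
  have key : ∀ r : ℝ, 0 < r → ∀ x : X, ∃ y : X, dist x y = r ∧ r ≤ b x - b y := by
    intro r hr x
    set N : ℕ := ⌈r + dist (γ 0) x⌉₊ with hN
    have hd : ∀ n : ℕ, r ≤ dist x (γ ((N + n : ℕ) : ℝ)) := by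
      intro n
      have h0 : dist (γ 0) (γ ((N + n : ℕ) : ℝ)) = ((N + n : ℕ) : ℝ) := by
        rw [hray 0 _ le_rfl (Nat.cast_nonneg _)]
        rw [abs_sub_comm, sub_zero, abs_of_nonneg (Nat.cast_nonneg _)]
      have h1 := dist_triangle (γ 0) x (γ ((N + n : ℕ) : ℝ))
      rw [h0] at h1
      have h2 : r + dist (γ 0) x ≤ (N : ℝ) := Nat.le_ceil _
      have h3 : (N : ℝ) ≤ ((N + n : ℕ) : ℝ) := by
        exact_mod_cast Nat.le_add_right N n
      linarith
    choose g hg0 hg1 hgd using fun n : ℕ => hgeo x (γ ((N + n : ℕ) : ℝ))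
    set d : ℕ → ℝ := fun n => dist x (γ ((N + n : ℕ) : ℝ)) with hdd
    have hdpos : ∀ n, 0 < d n := fun n => lt_of_lt_of_le hr (hd n)
    set p : ℕ → X := fun n => g n (r / d n) with hp
    have hs01 : ∀ n, r / d n ∈ Set.Icc (0:ℝ) 1 := fun n =>
      ⟨div_nonneg hr.le (hdpos n).le, (div_le_one (hdpos n)).2 (hd n)⟩
    have hxp : ∀ n, dist x (p n) = r := by
      intro n
      have h := hgd n 0 ⟨le_refl 0, zero_le_one⟩ (r / d n) (hs01 n)
      rw [hg0 n] at h
      rw [hp]; simp only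
      rw [h, zero_sub, abs_neg, abs_of_nonneg (hs01 n).1]
      exact div_mul_cancel₀ r (hdpos n).ne'
    have hpγ : ∀ n, dist (p n) (γ ((N + n : ℕ) : ℝ)) = d n - r := by
      intro n
      have h := hgd n (r / d n) (hs01 n) 1 ⟨zero_le_one, le_refl 1⟩
      rw [hg1 n] at h
      rw [hp]; simp only
      rw [h, abs_sub_comm, abs_of_nonneg (sub_nonneg.2 (hs01 n).2), sub_mul, one_mul,
        div_mul_cancel₀ r (hdpos n).ne']
    have hpball : ∀ n, p n ∈ closedBall x r := by
      intro n
      rw [mem_closedBall, dist_comm]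
      exact (hxp n).le
    obtain ⟨y, -, φ, hφ, hpy⟩ := (isCompact_closedBall x r).tendsto_subseq hpball
    refine ⟨y, ?_, ?_⟩
    · have hc : Tendsto (fun k => dist x (p (φ k))) atTop (nhds r) := by
        simp only [hxp]; exact tendsto_const_nhds
      exact tendsto_nhds_unique (tendsto_const_nhds.dist hpy) hc
    · have hby : Tendsto (fun k => b (p (φ k))) atTop (nhds (b y)) :=
        (hlipb.continuous.tendsto y).comp hpy
      have hbnat : Tendsto (fun n : ℕ => dist x (γ (n : ℝ)) - (n : ℝ)) atTop (nhds (b x)) :=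
        (hb x).comp tendsto_natCast_atTop_atTop
      have hsubseq : Tendsto (fun k => (N + φ k : ℕ)) atTop atTop :=
        tendsto_atTop_mono (fun k => Nat.le_add_left _ _) hφ.tendsto_atTop
      have hbx : Tendsto (fun k => dist x (γ ((N + φ k : ℕ) : ℝ)) - ((N + φ k : ℕ) : ℝ) - r)
          atTop (nhds (b x - r)) := (hbnat.comp hsubseq).sub_const r
      have hle : b y ≤ b x - r := by
        refine le_of_tendsto_of_tendsto' hby hbx ?_
        intro k
        have h := hmono (p (φ k)) ((N + φ k : ℕ) : ℝ) (Nat.cast_nonneg _)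
        rw [hpγ (φ k)] at h
        rw [hdd] at h
        linarith
      linarith
  intro x _
  have hub : ∀ᶠ y in nhdsWithin x {x}ᶜ, max (b x - b y) 0 / dist x y ≤ 1 := by
    filter_upwards [self_mem_nhdsWithin] with y hy
    have hyx : y ≠ x := hy
    have hxy : 0 < dist x y := dist_pos.2 (Ne.symm hyx)
    rw [div_le_one hxy]
    exact max_le (hlip x y) dist_nonneg
  have hfreq : ∃ᶠ y in nhdsWithin x {x}ᶜ, 1 ≤ max (b x - b y) 0 / dist x y := by
    rw [frequently_iff]
    intro S hS
    rw [Metric.mem_nhdsWithin_iff] at hS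
    obtain ⟨ε, hε, hsub⟩ := hS
    obtain ⟨y, hdy, hby⟩ := key (ε/2) (half_pos hε) x
    have hyx : y ≠ x := by
      intro h; rw [h, dist_self] at hdy; linarith
    refine ⟨y, hsub ⟨?_, hyx⟩, ?_⟩
    · rw [mem_ball, dist_comm, hdy]; linarith
    · rw [hdy, le_div_iff₀ (half_pos hε), one_mul]
      exact le_trans hby (le_max_left _ _)
  refine le_antisymm ?_ ?_
  · exact Filter.limsup_le_of_le (Filter.IsCoboundedUnder.of_frequently_ge hfreq) hub
  · exact Filter.le_limsup_of_frequently_le hfreq ⟨1, by simpa using hub⟩
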